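/- arXiv:2009.06747 — 2 statements merged into one kernel-verified Lean document; each statement's English description precedes it below -/
import Mathlib

section
/- Let f_i : ℝ^d → ℝ, i = 1,...,n, be convex differentiable functions whose sum F = Σ f_i is strongly convex with unique minimizer x*. Let L be the Laplacian of a connected undirected graph on n vertices and 𝐋 = L ⊗ I_d. Then the point (𝐱*, 𝐲*) with 𝐱* = 𝟙_n ⊗ x* and 𝐲* = −(∇f_1(x*),...,∇f_n(x*)) is the unique point satisfying: (i) ∇f(𝐱*) + 𝐋𝐱* + 𝐲* = 0, (ii) 𝐋𝐱* = 0, and (iii) (𝟙_n ⊗ I_d)ᵀ 𝐲* = 0. -/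
open RealInnerProductSpace

/-- Let `f i` be convex differentiable with gradients `f' i`, whose sum `F` is strongly
convex with unique minimizer `x*`. Let `L` be the Laplacian of a connected undirected
graph on `n` vertices, acting blockwise on `(ℝ^d)^n` (i.e. `𝐋 = L ⊗ I_d`). Then
`𝐱* = 𝟙ₙ ⊗ x*`, `𝐲* = −(∇f₁(x*),…,∇fₙ(x*))` is the unique point satisfying
(i) `∇f(𝐱*) + 𝐋𝐱* + 𝐲* = 0`, (ii) `𝐋𝐱* = 0`, (iii) `(𝟙ₙ ⊗ I_d)ᵀ 𝐲* = 0`. -/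
theorem equilibrium_unique (n d : ℕ) (G : SimpleGraph (Fin n)) [DecidableRel G.Adj]
    (hconn : G.Connected)
    (f : Fin n → EuclideanSpace ℝ (Fin d) → ℝ)
    (f' : Fin n → EuclideanSpace ℝ (Fin d) → EuclideanSpace ℝ (Fin d))
    (hdiff : ∀ i x, HasGradientAt (f i) (f' i x) x)
    (hconv : ∀ i, ConvexOn ℝ Set.univ (f i))
    (μ : ℝ) (hμ : 0 < μ)
    (hsc : ∀ x y, (∑ i, f i y) ≥ (∑ i, f i x) + ⟪∑ i, f' i x, y - x⟫ + (μ / 2) * ‖y - x‖ ^ 2)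
    (xstar : EuclideanSpace ℝ (Fin d)) (hmin : ∀ y, (∑ i, f i xstar) ≤ ∑ i, f i y) :
    ∀ (x y : Fin n → EuclideanSpace ℝ (Fin d)),
      ((∀ i, f' i (x i) + (∑ j, G.lapMatrix ℝ i j • x j) + y i = 0) ∧
       (∀ i, (∑ j, G.lapMatrix ℝ i j • x j) = 0) ∧
       (∑ i, y i) = 0)
      ↔ (x = fun _ => xstar) ∧ (y = fun i => -(f' i xstar)) := by
  -- The gradient of the sum vanishes at the minimizer
  have gsum : (∑ i, f' i xstar) = 0 := by
    have hF : HasFDerivAt (fun z => ∑ i, f i z)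
        (∑ i, (InnerProductSpace.toDual ℝ (EuclideanSpace ℝ (Fin d))) (f' i xstar)) xstar :=
      HasFDerivAt.fun_sum (fun i _ => (hdiff i xstar).hasFDerivAt)
    have hloc : IsLocalMin (fun z => ∑ i, f i z) xstar :=
      Filter.Eventually.of_forall hmin
    have h0 := hloc.hasFDerivAt_eq_zero hF
    have : (InnerProductSpace.toDual ℝ (EuclideanSpace ℝ (Fin d))) (∑ i, f' i xstar) = 0 := by
      rw [map_sum]; exact h0
    exact (InnerProductSpace.toDual ℝ _).injective (by simpa using this)
  -- row sums of the Laplacian are zero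
  have rowsum : ∀ i : Fin n, (∑ j, G.lapMatrix ℝ i j) = 0 := by
    intro i
    have := congrFun (G.lapMatrix_mulVec_const_eq_zero (R := ℝ)) i
    simpa [Matrix.mulVec, dotProduct] using this
  intro x y
  constructor
  · rintro ⟨h1, h2, h3⟩
    obtain ⟨i₀⟩ := hconn.nonempty
    -- all blocks of x are equal
    have hxeq : ∀ i j, x i = x j := by
      intro i j
      ext k
      have hv : Matrix.toLin' (G.lapMatrix ℝ) (fun i => x i k) = 0 := by
        funext i
        have h0 := congrArg (EuclideanSpace.proj (𝕜 := ℝ) k) (h2 i)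
        simp only [map_sum, map_smul, PiLp.proj_apply, map_zero,
          smul_eq_mul] at h0
        simpa [Matrix.toLin'_apply, Matrix.mulVec, dotProduct] using h0
      exact G.lapMatrix_mulVec_eq_zero_iff_forall_reachable.mp (by rwa [Matrix.toLin'_apply] at hv) i j (hconn i j)
    set c := x i₀ with hc
    have hy : ∀ i, y i = -(f' i c) := by
      intro i
      have h := h1 i
      rw [h2 i, hxeq i i₀] at h
      have h' : f' i c + y i = 0 := by simpa using h
      exact eq_neg_of_add_eq_zero_left (by rw [add_comm]; exact h')
    have hg : (∑ i, f' i c) = 0 := by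
      have : (∑ i, y i) = -∑ i, f' i c := by
        simp only [hy, Finset.sum_neg_distrib]
      rw [this] at h3
      simpa using h3
    have hceq : c = xstar := by
      have h1' := hsc c xstar
      rw [hg] at h1'
      simp only [inner_zero_left, add_zero] at h1'
      have h2' := hmin c
      have hns : ‖xstar - c‖ ^ 2 ≤ 0 := by nlinarith
      have : xstar - c = 0 := by
        have := norm_nonneg (xstar - c)
        have h0 : ‖xstar - c‖ = 0 := by nlinarith
        exact norm_eq_zero.mp h0
      exact (sub_eq_zero.mp this).symm
    refine ⟨funext fun i => by rw [hxeq i i₀, ← hceq], funext fun i => by rw [hy i, hceq]⟩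
  · rintro ⟨hx, hy⟩
    subst hx; subst hy
    have hlap : ∀ i : Fin n, (∑ j, G.lapMatrix ℝ i j • xstar) = 0 := by
      intro i
      rw [← Finset.sum_smul, rowsum i, zero_smul]
    refine ⟨fun i => by rw [hlap i]; simp, hlap, by
      rw [Finset.sum_neg_distrib, gsum, neg_zero]⟩
end

section
/- Consider the ODE system ż = −(∇f(x̃ + 𝐱*) − ∇f(𝐱*)) − 𝐋x̃ − S w̃, ẇ = S x̃, with x̃ = ∇φ*(z) − 𝐱*. The function V(z̃, w̃) = Σ_{i=1}^n D_{φ*}(z_i, z*) + (1/2)‖w̃‖² has time derivative V̇ = −⟨x̃, ∇f(x̃ + 𝐱*) − ∇f(𝐱*)⟩ − x̃ᵀ𝐋x̃ along trajectories. -/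
open RealInnerProductSpace

/-- Along trajectories of the system
`żᵢ = −(∇fᵢ(x̃ᵢ + x*) − ∇fᵢ(x*)) − (𝐋x̃)ᵢ − (S w̃)ᵢ`, `ẇ̃ᵢ = (S x̃)ᵢ`,
with `x̃ᵢ = ∇φ*(zᵢ) − x*`, the Lyapunov function
`V(z̃, w̃) = Σᵢ D_{φ*}(zᵢ, z*) + (1/2)‖w̃‖²` has time derivative
`V̇ = −⟨x̃, ∇f(x̃ + 𝐱*) − ∇f(𝐱*)⟩ − x̃ᵀ𝐋x̃`. -/
theorem lyapunov_derivative (n d : ℕ)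
    (φs : EuclideanSpace ℝ (Fin d) → ℝ)
    (φs' : EuclideanSpace ℝ (Fin d) → EuclideanSpace ℝ (Fin d))
    (hdiffs : ∀ z, HasGradientAt φs (φs' z) z)
    (f : Fin n → EuclideanSpace ℝ (Fin d) → ℝ)
    (f' : Fin n → EuclideanSpace ℝ (Fin d) → EuclideanSpace ℝ (Fin d))
    (hdiff : ∀ i x, HasGradientAt (f i) (f' i x) x)
    (hconv : ∀ i, ConvexOn ℝ Set.univ (f i))
    (L S : Matrix (Fin n) (Fin n) ℝ) (hLsymm : L.IsSymm) (hSsymm : S.IsSymm)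
    (xstar zstar : EuclideanSpace ℝ (Fin d)) (hzstar : φs' zstar = xstar)
    (z w : ℝ → Fin n → EuclideanSpace ℝ (Fin d))
    (xt : ℝ → Fin n → EuclideanSpace ℝ (Fin d))
    (hxt : ∀ t i, xt t i = φs' (z t i) - xstar)
    (hz : ∀ t i, HasDerivAt (fun s => z s i)
      (-(f' i (xt t i + xstar) - f' i xstar) - (∑ j, L i j • xt t j)
        - (∑ j, S i j • w t j)) t)
    (hw : ∀ t i, HasDerivAt (fun s => w s i) (∑ j, S i j • xt t j) t) :
    ∀ t : ℝ, HasDerivAt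
      (fun s => (∑ i, (φs (z s i) - φs zstar - ⟪φs' zstar, z s i - zstar⟫))
        + (1 / 2) * ∑ i, ‖w s i‖ ^ 2)
      (-(∑ i, ⟪xt t i, f' i (xt t i + xstar) - f' i xstar⟫)
        - ∑ i, ⟪xt t i, ∑ j, L i j • xt t j⟫) t := by
  intro t
  have hV1 : ∀ i, HasDerivAt
      (fun s => φs (z s i) - φs zstar - ⟪φs' zstar, z s i - zstar⟫)
      ⟪xt t i, -(f' i (xt t i + xstar) - f' i xstar) - (∑ j, L i j • xt t j)
        - (∑ j, S i j • w t j)⟫ t := by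
    intro i
    set zi := -(f' i (xt t i + xstar) - f' i xstar) - (∑ j, L i j • xt t j)
        - (∑ j, S i j • w t j) with hzi
    have h1 : HasDerivAt (fun s => φs (z s i)) ⟪φs' (z t i), zi⟫ t := by
      have := (hdiffs (z t i)).hasFDerivAt.comp_hasDerivAt t (hz t i)
      simpa only [Function.comp_def, InnerProductSpace.toDual_apply_apply, ← hzi] using this
    have h2 : HasDerivAt (fun s => (⟪φs' zstar, z s i - zstar⟫ : ℝ)) ⟪φs' zstar, zi⟫ t := by
      have hc : HasDerivAt (fun _ : ℝ => φs' zstar) 0 t := hasDerivAt_const _ _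
      have hz' : HasDerivAt (fun s => z s i - zstar) zi t := (hz t i).sub_const _
      have := hc.inner ℝ hz'
      simpa using this
    have h3 := (h1.sub_const (φs zstar)).sub h2
    refine h3.congr_deriv ?_
    rw [hxt, ← hzstar, ← inner_sub_left]
  have hV2 : ∀ i, HasDerivAt (fun s => ‖w s i‖ ^ 2)
      (2 * ⟪w t i, ∑ j, S i j • xt t j⟫) t := by
    intro i
    have h := (hw t i).inner ℝ (hw t i)
    have heq : (fun s => (⟪w s i, w s i⟫ : ℝ)) = fun s => ‖w s i‖ ^ 2 := by
      funext s; rw [real_inner_self_eq_norm_sq]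
    rw [heq] at h
    refine h.congr_deriv ?_
    rw [real_inner_comm]; ring
  have hS1 := HasDerivAt.fun_sum (fun i (_ : i ∈ Finset.univ) => hV1 i)
  have hS2 := (HasDerivAt.fun_sum (fun i (_ : i ∈ Finset.univ) => hV2 i)).const_mul (1/2 : ℝ)
  have htot := hS1.add hS2
  refine htot.congr_deriv ?_
  have key : ∑ i, (⟪xt t i, ∑ j, S i j • w t j⟫ : ℝ)
      = ∑ i, ⟪w t i, ∑ j, S i j • xt t j⟫ := by
    simp only [inner_sum, real_inner_smul_right]
    rw [Finset.sum_comm]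
    refine Finset.sum_congr rfl fun j _ => Finset.sum_congr rfl fun i _ => ?_
    rw [real_inner_comm, hSsymm.apply]
  have expand : ∀ i, (⟪xt t i, -(f' i (xt t i + xstar) - f' i xstar)
        - (∑ j, L i j • xt t j) - (∑ j, S i j • w t j)⟫ : ℝ)
      = -⟪xt t i, f' i (xt t i + xstar) - f' i xstar⟫
        - ⟪xt t i, ∑ j, L i j • xt t j⟫ - ⟪xt t i, ∑ j, S i j • w t j⟫ := by
    intro i; rw [inner_sub_right, inner_sub_right, inner_neg_right]
  simp only [expand]
  rw [Finset.sum_sub_distrib, Finset.sum_sub_distrib, Finset.sum_neg_distrib,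
    key, Finset.mul_sum]
  have h2 : ∑ i, (1/2 : ℝ) * (2 * ⟪w t i, ∑ j, S i j • xt t j⟫)
      = ∑ i, (⟪w t i, ∑ j, S i j • xt t j⟫ : ℝ) :=
    Finset.sum_congr rfl fun i _ => by ring
  rw [h2]; ring
end
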